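/- Let F(x) = x·ln x for x > 0 and fix a > 0. The function H_a^0(x) := ∫_a^x H_a^1(t) dt, where H_a^1(t) = (F(t) − F(a))/(t − a) for t ≠ a and H_a^1(a) = ln a + 1, is convex on the interval (0, ∞). -/

import Mathlib

/-- `H_a^1` : the secant slope of `F x = x * log x` at `a`, extended continuously at `x = a`. -/
noncomputable def Hone (a t : ℝ) : ℝ :=
  if t = a then Real.log a + 1 else (t * Real.log t - a * Real.log a) / (t - a)

/-- `H_a^0(x) = ∫_a^x H_a^1(t) dt`. -/
noncomputable def Hzero (a x : ℝ) : ℝ := ∫ t in a..x, Hone a t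

open Real Set Filter

lemma hone_eq_slope (a : ℝ) {t : ℝ} (ht : t ≠ a) :
    Hone a t = slope (fun x => x * Real.log x) a t := by
  rw [Hone, if_neg ht, slope_def_field]

lemma hone_mono (a : ℝ) (ha : 0 < a) : MonotoneOn (Hone a) (Ioi (0 : ℝ)) := by
  have hconv := Real.convexOn_mul_log
  have haI : a ∈ Ici (0 : ℝ) := le_of_lt ha
  have hderiv : HasDerivAt (fun x => x * Real.log x) (Real.log a + 1) a :=
    Real.hasDerivAt_mul_log (ne_of_gt ha)
  intro x hx y hy hxy
  rcases eq_or_ne x a with hxa | hxa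
  · rcases eq_or_ne y a with hya | hya
    · rw [hxa, hya]
    · have hay : a < y := lt_of_le_of_ne (hxa ▸ hxy) (Ne.symm hya)
      rw [hxa, hone_eq_slope a hya, Hone, if_pos rfl]
      have h2 := hconv.deriv_le_slope haI (Set.mem_Ici.mpr (le_of_lt hy)) hay hderiv.differentiableAt
      rwa [hderiv.deriv] at h2
  · rcases eq_or_ne y a with hya | hya
    · have hxa' : x < a := lt_of_le_of_ne (hya ▸ hxy) hxa
      rw [hya, hone_eq_slope a hxa, Hone, if_pos rfl]
      have h2 := hconv.slope_le_deriv (Set.mem_Ici.mpr (le_of_lt hx)) haI hxa' hderiv.differentiableAt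
      rwa [hderiv.deriv, slope_comm] at h2
    · rw [hone_eq_slope a hxa, hone_eq_slope a hya]
      exact hconv.slope_mono haI ⟨Set.mem_Ici.mpr (le_of_lt hx), hxa⟩ ⟨Set.mem_Ici.mpr (le_of_lt hy), hya⟩ hxy

lemma hone_continuousOn (a : ℝ) (ha : 0 < a) : ContinuousOn (Hone a) (Ioi (0 : ℝ)) := by
  intro t ht
  apply ContinuousAt.continuousWithinAt
  rcases eq_or_ne t a with hta | hta
  · rw [hta]
    rw [← continuousWithinAt_compl_self]
    have hderiv : HasDerivAt (fun x => x * Real.log x) (Real.log a + 1) a :=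
      Real.hasDerivAt_mul_log (ne_of_gt ha)
    have htend := hasDerivAt_iff_tendsto_slope.mp hderiv
    have hval : Hone a a = Real.log a + 1 := by rw [Hone, if_pos rfl]
    rw [ContinuousWithinAt, hval]
    refine htend.congr' ?_
    filter_upwards [self_mem_nhdsWithin] with s hs
    exact (hone_eq_slope a hs).symm
  · have hcont : ContinuousAt (fun s => (s * Real.log s - a * Real.log a) / (s - a)) t := by
      apply ContinuousAt.div
      · exact (continuousAt_id.mul ((Real.continuousAt_log (ne_of_gt ht)))).sub
          continuousAt_const
      · exact continuousAt_id.sub continuousAt_const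
      · exact sub_ne_zero_of_ne hta
    refine hcont.congr ?_
    have hopen : IsOpen {s : ℝ | s ≠ a} := isOpen_ne
    filter_upwards [hopen.mem_nhds hta] with s hs
    rw [Hone, if_neg hs]

lemma hzero_hasDerivAt (a : ℝ) (ha : 0 < a) {x : ℝ} (hx : x ∈ Ioi (0 : ℝ)) :
    HasDerivAt (Hzero a) (Hone a x) x := by
  have hcont := hone_continuousOn a ha
  have hsub : Set.uIcc a x ⊆ Ioi (0 : ℝ) := Set.ordConnected_Ioi.uIcc_subset ha hx
  have hint : IntervalIntegrable (Hone a) MeasureTheory.volume a x :=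
    (hcont.mono hsub).intervalIntegrable
  have hmeas := ContinuousOn.stronglyMeasurableAtFilter (μ := MeasureTheory.volume) isOpen_Ioi hcont x hx
  have hca : ContinuousAt (Hone a) x := (hcont x hx).continuousAt (isOpen_Ioi.mem_nhds hx)
  exact intervalIntegral.integral_hasDerivAt_right hint hmeas hca

theorem stmt1 (a : ℝ) (ha : 0 < a) :
    ConvexOn ℝ (Set.Ioi (0 : ℝ)) (fun x => Hzero a x) := by
  have hI : interior (Ioi (0 : ℝ)) = Ioi 0 := isOpen_Ioi.interior_eq
  refine MonotoneOn.convexOn_of_deriv (convex_Ioi 0) ?_ ?_ ?_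
  · intro x hx
    exact ((hzero_hasDerivAt a ha hx).continuousAt).continuousWithinAt
  · rw [hI]
    intro x hx
    exact (hzero_hasDerivAt a ha hx).differentiableAt.differentiableWithinAt
  · rw [hI]
    intro x hx y hy hxy
    rw [(hzero_hasDerivAt a ha hx).deriv, (hzero_hasDerivAt a ha hy).deriv]
    exact hone_mono a ha hx hy hxy
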